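/- arXiv:2005.06276 — 2 statements merged into one kernel-verified Lean document; each statement's English description precedes it below -/
import Mathlib

section
/- Let f : ℝ^p → ℝ be differentiable, μ-strongly convex, and have L-Lipschitz continuous gradient. Then for all x, y ∈ ℝ^p, ⟨∇f(x) - ∇f(y), x - y⟩ ≥ (μL/(μ+L)) ‖x - y‖² + (1/(μ+L)) ‖∇f(x) - ∇f(y)‖². -/
open RealInnerProductSpace
open Set



section Aux
variable {E : Type*} [NormedAddCommGroup E] [InnerProductSpace ℝ E] [CompleteSpace E]

/-- Derivative of a function along a line, from its gradient. -/
lemma hasDerivAt_comp_line {h : E → ℝ} {G : E → E}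
    (hG : ∀ z, HasGradientAt h (G z) z) (x v : E) (t : ℝ) :
    HasDerivAt (fun s : ℝ => h (x + s • v)) ⟪G (x + t • v), v⟫ t := by
  have hc : HasDerivAt (fun s : ℝ => x + s • v) v t := by
    simpa using ((hasDerivAt_id t).smul_const v).const_add x
  have hF : HasFDerivAt h (InnerProductSpace.toDual ℝ E (G (x + t • v))) (x + t • v) :=
    hG (x + t • v)
  have := hF.comp_hasDerivAt t hc
  rw [InnerProductSpace.toDual_apply_apply] at this
  exact this

/-- First-order condition: convex differentiable function lies above its tangents. -/
lemma grad_ineq {h : E → ℝ} {G : E → E} (hconv : ConvexOn ℝ Set.univ h)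
    (hG : ∀ z, HasGradientAt h (G z) z) (x y : E) :
    h x + ⟪G x, y - x⟫ ≤ h y := by
  have hφconv : ConvexOn ℝ Set.univ (fun s : ℝ => h (x + s • (y - x))) := by
    have := hconv.comp_affineMap (AffineMap.lineMap x y : ℝ →ᵃ[ℝ] E)
    simpa [Function.comp_def, AffineMap.lineMap_apply, add_comm, vsub_eq_sub] using this
  have hd : HasDerivAt (fun s : ℝ => h (x + s • (y - x))) ⟪G x, y - x⟫ 0 := by
    simpa using hasDerivAt_comp_line hG x (y - x) 0
  have := hφconv.le_slope_of_hasDerivAt (Set.mem_univ (0:ℝ)) (Set.mem_univ 1) one_pos hd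
  rw [slope_def_field] at this
  simp only [zero_smul, add_zero, one_smul, add_sub_cancel, sub_zero, div_one] at this
  linarith

/-- Monotone gradient implies convexity. -/
lemma convexOn_of_mono_grad {h : E → ℝ} {G : E → E}
    (hG : ∀ z, HasGradientAt h (G z) z)
    (hmono : ∀ a b, 0 ≤ ⟪G a - G b, a - b⟫) : ConvexOn ℝ Set.univ h := by
  refine ⟨convex_univ, fun x _ y _ a b ha hb hab => ?_⟩
  set φ : ℝ → ℝ := fun s => h (x + s • (y - x)) with hφ
  have hφd : ∀ t : ℝ, HasDerivAt φ ⟪G (x + t • (y - x)), y - x⟫ t := fun t =>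
    hasDerivAt_comp_line hG x (y - x) t
  have hφconv : ConvexOn ℝ Set.univ φ := by
    refine Monotone.convexOn_univ_of_deriv (fun t => (hφd t).differentiableAt) ?_
    intro s t hst
    rw [(hφd s).deriv, (hφd t).deriv]
    rcases hst.eq_or_lt with rfl | hst'
    · exact le_rfl
    have key := hmono (x + t • (y - x)) (x + s • (y - x))
    have he : (x + t • (y - x)) - (x + s • (y - x)) = (t - s) • (y - x) := by
      rw [add_sub_add_left_eq_sub, ← sub_smul]
    rw [he, real_inner_smul_right, inner_sub_left] at key
    nlinarith [sub_pos.mpr hst']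
  have key := hφconv.2 (Set.mem_univ (0:ℝ)) (Set.mem_univ 1) ha hb hab
  have ha' : a = 1 - b := by linarith
  subst ha'
  have hxy : (1 - b) • x + b • y = x + b • (y - x) := by module
  simp only [hφ, smul_eq_mul, mul_zero, mul_one, zero_add, zero_smul, add_zero, one_smul,
    add_sub_cancel] at key
  rw [hxy]
  simpa using key

/-- Gradient of `c/2 * ‖·‖²`. -/
lemma hasGradientAt_half_sq (c : ℝ) (z : E) :
    HasGradientAt (fun w : E => c / 2 * ‖w‖ ^ 2) (c • z) z := by
  have A := ((hasFDerivAt_id (𝕜 := ℝ) z).inner ℝ (hasFDerivAt_id z)).const_mul (c / 2)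
  have hfun : (fun w : E => c / 2 * ‖w‖ ^ 2) = fun w : E => c / 2 * ⟪w, w⟫ := by
    funext w; rw [real_inner_self_eq_norm_sq]
  rw [hasGradientAt_iff_hasFDerivAt, hfun]
  refine (A.congr_fderiv ?_)
  ext v
  simp [InnerProductSpace.toDual_apply_apply, real_inner_smul_left, real_inner_comm]
  ring

lemma hasGradientAt_half_sq_sub {c : ℝ} {h : E → ℝ} {G : E → E}
    (hG : ∀ z, HasGradientAt h (G z) z) (z : E) :
    HasGradientAt (fun w : E => c / 2 * ‖w‖ ^ 2 - h w) (c • z - G z) z := by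
  rw [hasGradientAt_iff_hasFDerivAt, map_sub]
  exact ((hasGradientAt_iff_hasFDerivAt.mp (hasGradientAt_half_sq c z))).sub (hasGradientAt_iff_hasFDerivAt.mp (hG z))

lemma hasGradientAt_sub_half_sq {c : ℝ} {h : E → ℝ} {G : E → E}
    (hG : ∀ z, HasGradientAt h (G z) z) (z : E) :
    HasGradientAt (fun w : E => h w - c / 2 * ‖w‖ ^ 2) (G z - c • z) z := by
  rw [hasGradientAt_iff_hasFDerivAt, map_sub]
  exact (hasGradientAt_iff_hasFDerivAt.mp (hG z)).sub (hasGradientAt_iff_hasFDerivAt.mp (hasGradientAt_half_sq c z))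

lemma hasGradientAt_sub_inner {h : E → ℝ} {G : E → E}
    (hG : ∀ z, HasGradientAt h (G z) z) (v z : E) :
    HasGradientAt (fun w : E => h w - ⟪v, w⟫) (G z - v) z := by
  rw [hasGradientAt_iff_hasFDerivAt, map_sub]
  refine (hasGradientAt_iff_hasFDerivAt.mp (hG z)).sub ?_
  have : HasFDerivAt (fun w : E => ⟪v, w⟫) (InnerProductSpace.toDual ℝ E v) z := by
    have := (InnerProductSpace.toDual ℝ E v).hasFDerivAt (x := z)
    convert this using 2
    rw [InnerProductSpace.toDual_apply_apply]
  exact this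

end Aux

section Coco
variable {E : Type*} [NormedAddCommGroup E] [InnerProductSpace ℝ E] [CompleteSpace E]

lemma cocoercive_key {h : E → ℝ} {G : E → E} {K : ℝ} (hK : 0 < K)
    (hG : ∀ z, HasGradientAt h (G z) z)
    (hconv : ConvexOn ℝ Set.univ h)
    (hconv2 : ConvexOn ℝ Set.univ (fun z => K / 2 * ‖z‖ ^ 2 - h z)) (x y : E) :
    h x + ⟪G x, y - x⟫ + 1 / (2 * K) * ‖G y - G x‖ ^ 2 ≤ h y := by
  set v := G x with hv
  set φ : E → ℝ := fun z => h z - ⟪v, z⟫ with hφ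
  set Gφ : E → E := fun z => G z - v with hGφ
  have hGφg : ∀ z, HasGradientAt φ (Gφ z) z := fun z => hasGradientAt_sub_inner hG v z
  have hφconv : ConvexOn ℝ Set.univ φ := by
    refine ⟨convex_univ, fun a _ b _ s t hs ht hst => ?_⟩
    have hc := hconv.2 (Set.mem_univ a) (Set.mem_univ b) hs ht hst
    simp only [hφ, smul_eq_mul, inner_add_right, real_inner_smul_right] at *
    linarith
  -- step 1 : x minimizes φ
  have step1 : ∀ z, φ x ≤ φ z := by
    intro z
    have := grad_ineq hφconv hGφg x z
    simp only [hGφ, hv, sub_self, inner_zero_left, add_zero] at this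
    exact this
  -- descent lemma for φ
  have descent : ∀ a b : E, φ a ≤ φ b + ⟪Gφ b, a - b⟫ + K / 2 * ‖a - b‖ ^ 2 := by
    intro a b
    set ψ : E → ℝ := fun z => K / 2 * ‖z‖ ^ 2 - φ z with hψ
    have hψconv : ConvexOn ℝ Set.univ ψ := by
      refine ⟨convex_univ, fun a' _ b' _ s t hs ht hst => ?_⟩
      have hc := hconv2.2 (Set.mem_univ a') (Set.mem_univ b') hs ht hst
      simp only [hψ, hφ, smul_eq_mul, inner_add_right, real_inner_smul_right] at *
      linarith
    have hψg : ∀ z, HasGradientAt ψ (K • z - Gφ z) z :=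
      fun z => hasGradientAt_half_sq_sub hGφg z
    have := grad_ineq hψconv hψg b a
    simp only [hψ, inner_sub_left, real_inner_smul_left] at this
    have hid : ⟪b, a - b⟫ = ⟪a, b⟫ - ‖b‖ ^ 2 := by
      rw [inner_sub_right, real_inner_self_eq_norm_sq, real_inner_comm]
    have hn : ‖a - b‖ ^ 2 = ‖a‖ ^ 2 - 2 * ⟪a, b⟫ + ‖b‖ ^ 2 := by
      rw [norm_sub_sq_real]
    nlinarith [this]
  -- combine with a := y - (1/K) • Gφ y
  have main := (step1 (y - (1 / K) • Gφ y)).trans (descent (y - (1 / K) • Gφ y) y)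
  have e1 : (y - (1 / K) • Gφ y) - y = -((1 / K) • Gφ y) := by abel
  rw [e1] at main
  have e2 : ⟪Gφ y, -((1 / K) • Gφ y)⟫ = -(1 / K) * ‖Gφ y‖ ^ 2 := by
    rw [inner_neg_right, real_inner_smul_right, real_inner_self_eq_norm_sq]; ring
  have e3 : ‖-((1 / K) • Gφ y)‖ ^ 2 = (1 / K) ^ 2 * ‖Gφ y‖ ^ 2 := by
    rw [norm_neg, norm_smul, mul_pow, Real.norm_eq_abs, sq_abs]
  rw [e2, e3] at main
  have hKne : K ≠ 0 := ne_of_gt hK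
  have harith : -(1 / K) * ‖Gφ y‖ ^ 2 + K / 2 * ((1 / K) ^ 2 * ‖Gφ y‖ ^ 2)
      = -(1 / (2 * K)) * ‖Gφ y‖ ^ 2 := by
    have : (1 / K) ^ 2 = 1 / K ^ 2 := by rw [div_pow, one_pow]
    rw [this]
    field_simp
    ring
  have hGφy : Gφ y = G y - G x := rfl
  have hφx : φ x = h x - ⟪G x, x⟫ := rfl
  have hφy : φ y = h y - ⟪G x, y⟫ := rfl
  rw [hφx, hφy, hGφy] at main
  have hinner : ⟪G x, y - x⟫ = ⟪G x, y⟫ - ⟪G x, x⟫ := by rw [inner_sub_right]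
  nlinarith [main]

lemma cocoercive {h : E → ℝ} {G : E → E} {K : ℝ} (hK : 0 < K)
    (hG : ∀ z, HasGradientAt h (G z) z)
    (hconv : ConvexOn ℝ Set.univ h)
    (hconv2 : ConvexOn ℝ Set.univ (fun z => K / 2 * ‖z‖ ^ 2 - h z)) (x y : E) :
    ‖G x - G y‖ ^ 2 ≤ K * ⟪G x - G y, x - y⟫ := by
  have h1 := cocoercive_key hK hG hconv hconv2 x y
  have h2 := cocoercive_key hK hG hconv hconv2 y x
  rw [norm_sub_rev (G y)] at h1
  simp only [inner_sub_left, inner_sub_right] at *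
  have hsum : 2 * (1 / (2 * K) * ‖G x - G y‖ ^ 2) ≤
      inner ℝ (G x) x - inner ℝ (G y) x - (inner ℝ (G x) y - inner ℝ (G y) y) := by linarith
  have hmul := mul_le_mul_of_nonneg_left hsum hK.le
  have hid : K * (2 * (1 / (2 * K) * ‖G x - G y‖ ^ 2)) = ‖G x - G y‖ ^ 2 := by
    field_simp
  linarith

end Coco

/-- Coercivity inequality for strongly convex functions with Lipschitz gradient
(Nesterov): `⟨∇f(x) - ∇f(y), x - y⟩ ≥ μL/(μ+L) ‖x-y‖² + 1/(μ+L) ‖∇f(x)-∇f(y)‖²`. -/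
theorem strong_convex_lipschitz_grad_coercivity
    {p : ℕ} (f : EuclideanSpace ℝ (Fin p) → ℝ)
    (g : EuclideanSpace ℝ (Fin p) → EuclideanSpace ℝ (Fin p))
    (μ L : ℝ) (hμ : 0 < μ) (hμL : μ ≤ L)
    (hgrad : ∀ x, HasGradientAt f (g x) x)
    (hsc : StrongConvexOn Set.univ μ f)
    (hlip : ∀ x y, ‖g x - g y‖ ≤ L * ‖x - y‖) :
    ∀ x y : EuclideanSpace ℝ (Fin p),
      μ * L / (μ + L) * ‖x - y‖ ^ 2 + 1 / (μ + L) * ‖g x - g y‖ ^ 2 ≤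
        ⟪g x - g y, x - y⟫ := by
  have hGh : ∀ z, HasGradientAt (fun w => f w - μ / 2 * ‖w‖ ^ 2) (g z - μ • z) z :=
    fun z => hasGradientAt_sub_half_sq hgrad z
  have hconvh : ConvexOn ℝ Set.univ (fun w => f w - μ / 2 * ‖w‖ ^ 2) :=
    strongConvexOn_iff_convex.mp hsc
  have hmono : ∀ a b : EuclideanSpace ℝ (Fin p),
      μ * ‖a - b‖ ^ 2 ≤ ⟪g a - g b, a - b⟫ := by
    intro a b
    have e1 := grad_ineq hconvh hGh a b
    have e2 := grad_ineq hconvh hGh b a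
    have h0 : ⟪g a - μ • a, a - b⟫ = -⟪g a - μ • a, b - a⟫ := by
      rw [show a - b = -(b - a) from (neg_sub b a).symm, inner_neg_right]
    have h1 : ⟪g b - μ • b, a - b⟫ = -⟪g b - μ • b, b - a⟫ := by
      rw [show a - b = -(b - a) from (neg_sub b a).symm, inner_neg_right]
    have key : 0 ≤ ⟪(g a - μ • a) - (g b - μ • b), a - b⟫ := by
      rw [inner_sub_left, h0, h1]
      linarith
    have hE : (g a - μ • a) - (g b - μ • b) = (g a - g b) - μ • (a - b) := by module
    rw [hE, inner_sub_left, real_inner_smul_left, real_inner_self_eq_norm_sq] at key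
    linarith
  intro x y
  have hpos : (0:ℝ) < μ + L := by linarith
  rw [show μ * L / (μ + L) * ‖x - y‖ ^ 2 + 1 / (μ + L) * ‖g x - g y‖ ^ 2
      = (μ * L * ‖x - y‖ ^ 2 + ‖g x - g y‖ ^ 2) / (μ + L) by ring, div_le_iff₀ hpos]
  obtain rfl | hlt := hμL.eq_or_lt
  · -- case μ = L
    have hC := hmono x y
    have hB := pow_le_pow_left₀ (norm_nonneg (g x - g y)) (hlip x y) 2
    nlinarith [mul_le_mul_of_nonneg_left hC hμ.le, norm_nonneg (x - y),
      norm_nonneg (g x - g y)]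
  · -- case μ < L
    set K := L - μ with hKdef
    have hK : 0 < K := by simp [hKdef]; linarith
    have hconvq : ConvexOn ℝ Set.univ (fun z => L / 2 * ‖z‖ ^ 2 - f z) := by
      refine convexOn_of_mono_grad (G := fun z => L • z - g z)
        (fun z => hasGradientAt_half_sq_sub hgrad z) ?_
      intro a b
      have he : (L • a - g a) - (L • b - g b) = L • (a - b) - (g a - g b) := by module
      rw [he, inner_sub_left, real_inner_smul_left, real_inner_self_eq_norm_sq]
      have h1 := real_inner_le_norm (g a - g b) (a - b)
      have h2 := mul_le_mul_of_nonneg_right (hlip a b) (norm_nonneg (a - b))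
      nlinarith [norm_nonneg (a - b)]
    have hfe : (fun z : EuclideanSpace ℝ (Fin p) =>
        K / 2 * ‖z‖ ^ 2 - (fun w => f w - μ / 2 * ‖w‖ ^ 2) z)
        = (fun z => L / 2 * ‖z‖ ^ 2 - f z) := by
      funext z; simp only [hKdef]; ring
    have hconv2 : ConvexOn ℝ Set.univ (fun z : EuclideanSpace ℝ (Fin p) =>
        K / 2 * ‖z‖ ^ 2 - (fun w => f w - μ / 2 * ‖w‖ ^ 2) z) := by
      rw [hfe]; exact hconvq
    have coco := cocoercive hK hGh hconvh hconv2 x y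
    have hE : (g x - μ • x) - (g y - μ • y) = (g x - g y) - μ • (x - y) := by module
    rw [hE] at coco
    have hn : ‖(g x - g y) - μ • (x - y)‖ ^ 2
        = ‖g x - g y‖ ^ 2 - 2 * (μ * ⟪g x - g y, x - y⟫) + μ ^ 2 * ‖x - y‖ ^ 2 := by
      rw [norm_sub_sq_real, real_inner_smul_right, norm_smul, Real.norm_eq_abs, mul_pow,
        sq_abs]
    have hR : ⟪(g x - g y) - μ • (x - y), x - y⟫
        = ⟪g x - g y, x - y⟫ - μ * ‖x - y‖ ^ 2 := by
      rw [inner_sub_left, real_inner_smul_left, real_inner_self_eq_norm_sq]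
    rw [hn, hR] at coco
    simp only [hKdef] at coco
    nlinarith [coco]
end

section
/- Let (d_k)_{k ≥ k₀} be a nonnegative sequence satisfying d_{k+1} ≤ (1 - ηᾱ/(k+1)) d_k + ᾱ²Δ₀/(k+1)² + ᾱΔ₂/(k+1) for all k ≥ k₀, where η > 0, ᾱ > 1/η, ηᾱ/(k+1) ∈ (0,1) for k ≥ k₀, and Δ₀, Δ₂ ≥ 0. Define Δ₁ = max{ ᾱ²Δ₀/(ηᾱ - 1), (k₀+1) d_{k₀} + ᾱ²Δ₀/(k₀+1) }. Then for every k ≥ k₀, d_{k+1} ≤ Δ₁/(k+1) + ᾱΔ₂. -/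
set_option maxHeartbeats 1000000 in
/-- Diminishing step-size recursion yields an `O(1/k)` rate plus a constant offset. -/
theorem diminishing_step_recursion_bound
    (d : ℕ → ℝ) (k₀ : ℕ) (η ᾱ Δ₀ Δ₂ : ℝ)
    (hd : ∀ k, 0 ≤ d k)
    (hη : 0 < η) (hᾱ : 1 / η < ᾱ)
    (hstep : ∀ k, k₀ ≤ k → η * ᾱ / (k + 1 : ℝ) < 1)
    (hΔ₀ : 0 ≤ Δ₀) (hΔ₂ : 0 ≤ Δ₂)
    (hrec : ∀ k, k₀ ≤ k →
      d (k + 1) ≤ (1 - η * ᾱ / (k + 1 : ℝ)) * d k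
        + ᾱ ^ 2 * Δ₀ / ((k + 1 : ℝ)) ^ 2 + ᾱ * Δ₂ / (k + 1 : ℝ)) :
    ∀ k, k₀ ≤ k →
      d (k + 1) ≤
        max (ᾱ ^ 2 * Δ₀ / (η * ᾱ - 1))
            ((k₀ + 1 : ℝ) * d k₀ + ᾱ ^ 2 * Δ₀ / (k₀ + 1 : ℝ)) / (k + 1 : ℝ)
        + ᾱ * Δ₂ := by
  have hηᾱ : 1 < η * ᾱ := by
    rw [div_lt_iff₀ hη] at hᾱ
    nlinarith
  have hᾱpos : 0 < ᾱ := lt_trans (by positivity) hᾱ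
  set Δ₁ := max (ᾱ ^ 2 * Δ₀ / (η * ᾱ - 1))
      ((k₀ + 1 : ℝ) * d k₀ + ᾱ ^ 2 * Δ₀ / (k₀ + 1 : ℝ)) with hΔ₁def
  have hΔ₁nn : 0 ≤ Δ₁ :=
    le_trans (div_nonneg (by positivity) (by linarith)) (le_max_left _ _)
  have hmax1 : ᾱ ^ 2 * Δ₀ ≤ Δ₁ * (η * ᾱ - 1) := by
    have h := le_max_left (ᾱ ^ 2 * Δ₀ / (η * ᾱ - 1))
      ((k₀ + 1 : ℝ) * d k₀ + ᾱ ^ 2 * Δ₀ / (k₀ + 1 : ℝ))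
    rw [div_le_iff₀ (by linarith : (0:ℝ) < η * ᾱ - 1)] at h
    exact h
  intro k hk
  induction k, hk using Nat.le_induction with
  | base =>
    set K : ℝ := (k₀ : ℝ) + 1 with hKdef
    have hK0 : (0:ℝ) < K := by positivity
    have hK1 : (1:ℝ) ≤ K := by
      have : (0:ℝ) ≤ (k₀:ℝ) := Nat.cast_nonneg _
      linarith
    have hmax2 : K * d k₀ + ᾱ ^ 2 * Δ₀ / K ≤ Δ₁ := le_max_right _ _
    have hmax2' : K ^ 2 * d k₀ + ᾱ ^ 2 * Δ₀ ≤ Δ₁ * K := by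
      calc K ^ 2 * d k₀ + ᾱ ^ 2 * Δ₀ = (K * d k₀ + ᾱ ^ 2 * Δ₀ / K) * K := by
            field_simp
        _ ≤ Δ₁ * K := mul_le_mul_of_nonneg_right hmax2 hK0.le
    have hr := hrec k₀ le_rfl
    have e : Δ₁ / K + ᾱ * Δ₂ -
        ((1 - η * ᾱ / K) * d k₀ + ᾱ ^ 2 * Δ₀ / K ^ 2 + ᾱ * Δ₂ / K)
        = (Δ₁ * K + ᾱ * Δ₂ * K * (K - 1) - (K - η * ᾱ) * K * d k₀ - ᾱ ^ 2 * Δ₀)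
          / K ^ 2 := by
      field_simp
      ring
    have hnum : 0 ≤ Δ₁ * K + ᾱ * Δ₂ * K * (K - 1) - (K - η * ᾱ) * K * d k₀
        - ᾱ ^ 2 * Δ₀ := by
      nlinarith [mul_nonneg (mul_nonneg (mul_nonneg hη.le hᾱpos.le) hK0.le) (hd k₀),
        mul_nonneg (mul_nonneg (mul_nonneg hᾱpos.le hΔ₂) hK0.le)
          (by linarith : (0:ℝ) ≤ K - 1)]
    have hfin : (1 - η * ᾱ / K) * d k₀ + ᾱ ^ 2 * Δ₀ / K ^ 2 + ᾱ * Δ₂ / K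
        ≤ Δ₁ / K + ᾱ * Δ₂ := by
      have : 0 ≤ Δ₁ / K + ᾱ * Δ₂ -
          ((1 - η * ᾱ / K) * d k₀ + ᾱ ^ 2 * Δ₀ / K ^ 2 + ᾱ * Δ₂ / K) := by
        rw [e]; positivity
      linarith
    exact le_trans hr hfin
  | succ k hk ih =>
    set A : ℝ := (k : ℝ) + 1 with hAdef
    have hA0 : (0:ℝ) < A := by positivity
    set B : ℝ := A + 1 with hBdef
    have hB0 : (0:ℝ) < B := by positivity
    have hcast : ((k + 1 : ℕ) : ℝ) + 1 = B := by push_cast [hAdef, hBdef]; ring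
    have hstep' : η * ᾱ < B := by
      have h := hstep (k + 1) (by omega)
      rw [div_lt_one (by positivity)] at h
      calc η * ᾱ < ((k+1:ℕ):ℝ) + 1 := h
        _ = B := hcast
    have hr := hrec (k + 1) (by omega)
    rw [hcast] at hr ⊢
    have hstep1 : 0 ≤ 1 - η * ᾱ / B := by
      have : η * ᾱ / B < 1 := by rw [div_lt_one hB0]; exact hstep'
      linarith
    have h1 : (1 - η * ᾱ / B) * d (k + 1)
        ≤ (1 - η * ᾱ / B) * (Δ₁ / A + ᾱ * Δ₂) :=
      mul_le_mul_of_nonneg_left ih hstep1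
    have e : Δ₁ / B + ᾱ * Δ₂ -
        ((1 - η * ᾱ / B) * (Δ₁ / A + ᾱ * Δ₂) + ᾱ ^ 2 * Δ₀ / B ^ 2 + ᾱ * Δ₂ / B)
        = (Δ₁ * B * (η * ᾱ - 1) + ᾱ * Δ₂ * (η * ᾱ - 1) * A * B - ᾱ ^ 2 * Δ₀ * A)
          / (A * B ^ 2) := by
      rw [hBdef]
      field_simp
      ring
    have hnum : 0 ≤ Δ₁ * B * (η * ᾱ - 1) + ᾱ * Δ₂ * (η * ᾱ - 1) * A * B
        - ᾱ ^ 2 * Δ₀ * A := by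
      have h2 : ᾱ ^ 2 * Δ₀ * B ≤ Δ₁ * (η * ᾱ - 1) * B :=
        mul_le_mul_of_nonneg_right hmax1 hB0.le
      have h3 : 0 ≤ ᾱ * Δ₂ * (η * ᾱ - 1) * A * B := by
        have : (0:ℝ) ≤ η * ᾱ - 1 := by linarith
        positivity
      nlinarith [mul_nonneg (mul_nonneg (pow_nonneg hᾱpos.le 2) hΔ₀)
        (by linarith [hBdef] : (0:ℝ) ≤ B - A)]
    have hfin : (1 - η * ᾱ / B) * (Δ₁ / A + ᾱ * Δ₂) + ᾱ ^ 2 * Δ₀ / B ^ 2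
        + ᾱ * Δ₂ / B ≤ Δ₁ / B + ᾱ * Δ₂ := by
      have : 0 ≤ Δ₁ / B + ᾱ * Δ₂ -
          ((1 - η * ᾱ / B) * (Δ₁ / A + ᾱ * Δ₂) + ᾱ ^ 2 * Δ₀ / B ^ 2
            + ᾱ * Δ₂ / B) := by
        rw [e]; positivity
      linarith
    linarith
end
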